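/- Let r_1, …, r_n be nonnegative reals and let e_k denote the k-th elementary symmetric polynomial in r_1, …, r_n (with e_0 = 1). Then for every integer y with 1 ≤ y ≤ n−1, Newton's inequality holds: e_y² · y · (n − y) ≥ e_{y+1} · e_{y−1} · (n − y + 1) · (y + 1). -/

import Mathlib

open Finset Polynomial

-- complement bijection on powersetCard
lemma newton_sum_compl (n k : ℕ) (hk : k ≤ n) (r : Fin n → ℝ) :
    ∑ t ∈ (univ : Finset (Fin n)).powersetCard k, ∏ i ∈ tᶜ, r i
      = ∑ t ∈ (univ : Finset (Fin n)).powersetCard (n - k), ∏ i ∈ t, r i := by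
  refine Finset.sum_nbij' (fun t => tᶜ) (fun t => tᶜ) ?_ ?_ ?_ ?_ ?_
  · intro t ht
    rw [mem_powersetCard_univ] at ht ⊢
    rw [card_compl, ht, Fintype.card_fin]
  · intro t ht
    rw [mem_powersetCard_univ] at ht ⊢
    rw [card_compl, ht, Fintype.card_fin]
    omega
  · intro t _; exact compl_compl t
  · intro t _; exact compl_compl t
  · intro t _; rfl

-- (sum)^2 = sum of squares + 2 * pair sum
lemma newton_sq_sum {ι : Type*} [DecidableEq ι] (s : Finset ι) (a : ι → ℝ) :
    (∑ i ∈ s, a i) ^ 2 = (∑ i ∈ s, a i ^ 2)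
      + 2 * ∑ t ∈ s.powersetCard 2, ∏ i ∈ t, a i := by
  induction s using Finset.induction_on with
  | empty => rw [Finset.powersetCard_eq_empty.2 (by simp)]; simp
  | @insert x s hx ih =>
    have hpc : (insert x s).powersetCard 2 = s.powersetCard 2 ∪ (s.powersetCard 1).image (insert x) :=
      powersetCard_succ_insert hx 1
    have hdisj : Disjoint (s.powersetCard 2) ((s.powersetCard 1).image (insert x)) := by
      rw [Finset.disjoint_left]
      rintro t ht ht'
      rw [mem_powersetCard] at ht
      obtain ⟨u, hu, rfl⟩ := Finset.mem_image.1 ht'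
      exact hx (ht.1 (mem_insert_self x u))
    have himg : ∑ t ∈ (s.powersetCard 1).image (insert x), ∏ i ∈ t, a i
        = ∑ u ∈ s.powersetCard 1, a x * ∏ i ∈ u, a i := by
      rw [Finset.sum_image]
      · refine Finset.sum_congr rfl fun u hu => ?_
        rw [mem_powersetCard] at hu
        rw [Finset.prod_insert (fun h => hx (hu.1 h))]
      · intro u hu v hv h
        rw [Finset.mem_coe, mem_powersetCard] at hu hv
        have hxu : x ∉ u := fun h => hx (hu.1 h)
        have hxv : x ∉ v := fun h => hx (hv.1 h)
        rw [← Finset.erase_insert hxu, ← Finset.erase_insert hxv, h]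
    have h1 : ∑ u ∈ s.powersetCard 1, a x * ∏ i ∈ u, a i = a x * ∑ i ∈ s, a i := by
      rw [powersetCard_one, Finset.sum_map, ← Finset.mul_sum]
      simp
    rw [Finset.sum_insert hx, Finset.sum_insert hx, hpc, Finset.sum_union hdisj, himg, h1]
    linear_combination ih


lemma newton_exists_fn {α : Type*} (m : ℕ) (s : Multiset α) (h : Multiset.card s = m) :
    ∃ r : Fin m → α, Multiset.map r Finset.univ.val = s := by
  subst h
  refine ⟨fun i => s.toList.get (Fin.cast (by simp) i), ?_⟩
  have h1 : (Finset.univ : Finset (Fin (Multiset.card s))).val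
      = ↑(List.finRange (Multiset.card s)) := rfl
  conv_rhs => rw [← Multiset.coe_toList s]
  rw [h1, Multiset.map_coe]
  congr 1
  apply List.ext_get
  · simp
  · intro i h1 h2
    simp [List.get_finRange]

lemma newton_step (n : ℕ) (hn : 2 ≤ n) (r : Fin n → ℝ) (hr : ∀ i, 0 ≤ r i) :
    ∃ r' : Fin (n-1) → ℝ, (∀ i, 0 ≤ r' i) ∧ ∀ j, j ≤ n - 1 →
      (n : ℝ) * (∑ t ∈ (univ : Finset (Fin (n-1))).powersetCard j, ∏ i ∈ t, r' i)
        = ((n - j : ℕ) : ℝ) * ∑ t ∈ (univ : Finset (Fin n)).powersetCard j, ∏ i ∈ t, r i := by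
  set P : Polynomial ℝ := ∏ i : Fin n, (X + C (r i)) with hP
  have hmono : P.Monic := monic_prod_of_monic _ _ fun i _ => monic_X_add_C (r i)
  have hdeg : P.natDegree = n := by
    rw [hP, natDegree_prod_of_monic _ _ fun i _ => monic_X_add_C (r i)]
    simp [natDegree_X_add_C]
  have hProots : P.roots = Multiset.map (fun i => -(r i)) Finset.univ.val := by
    have h1 : P = ((Finset.univ.val.map (fun i => -(r i))).map fun t => X - C t).prod := by
      rw [Multiset.map_map, hP]
      show (Finset.univ.val.map fun i => X + C (r i)).prod = _
      congr 1
      apply Multiset.map_congr rfl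
      intro i _
      simp [sub_eq_add_neg]
    rw [h1, roots_multiset_prod_X_sub_C]
  have hcardP : Multiset.card P.roots = n := by rw [hProots]; simp
  set D : Polynomial ℝ := derivative P with hD
  have hDdeg : D.natDegree ≤ n - 1 := by
    have := natDegree_derivative_le P
    rw [hdeg] at this
    exact this
  have hcardD : Multiset.card D.roots = n - 1 := by
    have h1 : Multiset.card D.roots ≤ n - 1 := (card_roots' D).trans hDdeg
    have h2 := P.card_roots_le_derivative
    rw [hcardP, ← hD] at h2
    omega
  have hDdeg_eq : D.natDegree = n - 1 :=
    le_antisymm hDdeg (hcardD ▸ card_roots' D)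
  have hDfact := C_leadingCoeff_mul_prod_multiset_X_sub_C (p := D) (by rw [hcardD, hDdeg_eq])
  -- roots of D are nonpositive
  have hnonpos : ∀ x ∈ D.roots, x ≤ 0 := by
    intro x hx
    by_contra hpos
    push_neg at hpos
    have hroot := isRoot_of_mem_roots hx
    have hder : D = ∑ i ∈ univ, ((∏ j ∈ univ.erase i, (X + C (r j))) : Polynomial ℝ) := by
      rw [hD, hP]
      show derivative (Multiset.map (fun i => X + C (r i)) univ.val).prod = _
      rw [derivative_prod]
      show _ = (Multiset.map (fun i => ∏ j ∈ univ.erase i, (X + C (r j))) univ.val).sum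
      congr 1
      apply Multiset.map_congr rfl
      intro i _
      rw [derivative_X_add_C, mul_one]
      show (Multiset.map (fun i => X + C (r i)) (univ.val.erase i)).prod = _
      rw [← Finset.erase_val]
      rfl
    have heval : D.eval x > 0 := by
      rw [hder, eval_finset_sum]
      apply Finset.sum_pos
      · intro i _
        rw [eval_prod]
        apply Finset.prod_pos
        intro j _
        simp only [eval_add, eval_X, eval_C]
        have := hr j
        linarith
      · exact univ_nonempty_iff.2 ⟨⟨0, by omega⟩⟩
    exact absurd hroot (by simp [IsRoot]; linarith)
  set s' : Multiset ℝ := D.roots.map (fun t => -t) with hs'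
  have hs'card : Multiset.card s' = n - 1 := by rw [hs', Multiset.card_map, hcardD]
  have hs'nonneg : ∀ u ∈ s', 0 ≤ u := by
    intro u hu
    rw [hs', Multiset.mem_map] at hu
    obtain ⟨x, hx, rfl⟩ := hu
    linarith [hnonpos x hx]
  have hconv : (D.roots.map fun a => X - C a).prod = (s'.map fun u => X + C u).prod := by
    rw [hs', Multiset.map_map]
    congr 1
    apply Multiset.map_congr rfl
    intro t _
    simp [sub_eq_add_neg]
  -- coefficient identities
  have hcoeffD : ∀ j, j ≤ n - 1 →
      D.coeff (n - 1 - j) = D.leadingCoeff * s'.esymm j := by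
    intro j hj
    conv_lhs => rw [← hDfact]
    rw [hconv, coeff_C_mul, Multiset.prod_X_add_C_coeff s' (by omega)]
    congr 2
    omega
  have hcoeffD' : ∀ j, j ≤ n - 1 →
      D.coeff (n - 1 - j) = ((n - j : ℕ) : ℝ) *
        ∑ t ∈ (univ : Finset (Fin n)).powersetCard j, ∏ i ∈ t, r i := by
    intro j hj
    rw [hD, coeff_derivative, hP]
    rw [show n - 1 - j + 1 = n - j from by omega]
    rw [Finset.prod_X_add_C_coeff univ r (by simp only [card_univ, Fintype.card_fin]; omega)]
    rw [show #(univ : Finset (Fin n)) - (n - j) = j from by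
      simp only [card_univ, Fintype.card_fin]; omega]
    rw [mul_comm]
    congr 1
    rw [show n - j = n - 1 - j + 1 from by omega]
    push_cast
    ring
  -- leading coefficient of D is n
  have hE0 : (∑ t ∈ (univ : Finset (Fin n)).powersetCard 0, ∏ i ∈ t, r i) = 1 := by
    simp
  have hlead : D.leadingCoeff = (n : ℝ) := by
    have h0 := (hcoeffD 0 (by omega)).symm.trans (hcoeffD' 0 (by omega))
    rw [show s'.esymm 0 = 1 from by simp [Multiset.esymm], hE0, mul_one, mul_one] at h0
    rw [h0]
    push_cast [Nat.sub_zero]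
    ring
  obtain ⟨r', hr'⟩ := newton_exists_fn (n-1) s' hs'card
  refine ⟨r', ?_, ?_⟩
  · intro i
    apply hs'nonneg
    rw [← hr']
    exact Multiset.mem_map_of_mem _ (Finset.mem_univ_val i)
  · intro j hj
    have h1 := (hcoeffD j hj).symm.trans (hcoeffD' j hj)
    rw [hlead] at h1
    rw [← h1]
    congr 1
    rw [← hr', Finset.esymm_map_val]

lemma newton_base (n : ℕ) (r : Fin n → ℝ) (hr : ∀ i, 0 ≤ r i)
    (y : ℕ) (hy1 : 1 ≤ y) (hyn : y + 1 = n) :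
    (∑ t ∈ (univ : Finset (Fin n)).powersetCard y, ∏ i ∈ t, r i) ^ 2 * y * ((n : ℝ) - y) ≥
      (∑ t ∈ (univ : Finset (Fin n)).powersetCard (y+1), ∏ i ∈ t, r i) *
      (∑ t ∈ (univ : Finset (Fin n)).powersetCard (y-1), ∏ i ∈ t, r i) *
      ((n : ℝ) - y + 1) * ((y : ℝ) + 1) := by
  have hn2 : 2 ≤ n := by omega
  set a : Fin n → ℝ := fun i => ∏ j ∈ univ.erase i, r j with ha
  have hcard : (univ : Finset (Fin n)).card = n := by simp
  -- E y = ∑ a i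
  have h1 : (∑ t ∈ (univ : Finset (Fin n)).powersetCard y, ∏ i ∈ t, r i) = ∑ i, a i := by
    have := newton_sum_compl n 1 (by omega) r
    rw [show n - 1 = y by omega] at this
    rw [← this, powersetCard_one, Finset.sum_map]
    refine Finset.sum_congr rfl fun i _ => ?_
    simp only [Function.Embedding.coeFn_mk]
    rw [compl_singleton]
  -- E (y+1) = ∏ r
  have h2 : (∑ t ∈ (univ : Finset (Fin n)).powersetCard (y+1), ∏ i ∈ t, r i) = ∏ i, r i := by
    have hps := Finset.powersetCard_self (univ : Finset (Fin n))
    rw [hcard] at hps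
    rw [hyn, hps, Finset.sum_singleton]
  -- E (y-1) = ∑ over pairs of ∏ compl
  have h3 : (∑ t ∈ (univ : Finset (Fin n)).powersetCard (y-1), ∏ i ∈ t, r i)
      = ∑ t ∈ (univ : Finset (Fin n)).powersetCard 2, ∏ i ∈ tᶜ, r i := by
    rw [newton_sum_compl n 2 (by omega) r, show n - 2 = y - 1 by omega]
  -- pair identity
  have h4 : ∀ t ∈ (univ : Finset (Fin n)).powersetCard 2,
      (∏ i, r i) * ∏ i ∈ tᶜ, r i = ∏ i ∈ t, a i := by
    intro t ht
    rw [mem_powersetCard_univ] at ht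
    obtain ⟨i, j, hij, rfl⟩ := Finset.card_eq_two.1 ht
    have hc1 : (univ.erase i).erase j = ({i, j} : Finset (Fin n))ᶜ := by
      ext k; simp only [mem_erase, mem_compl, mem_insert, mem_singleton, mem_univ, and_true, true_and]; push_neg; tauto
    have hc2 : (univ.erase j).erase i = ({i, j} : Finset (Fin n))ᶜ := by
      ext k; simp only [mem_erase, mem_compl, mem_insert, mem_singleton, mem_univ, and_true, true_and]; push_neg; tauto
    have e1 : a i = r j * ∏ k ∈ ({i, j} : Finset (Fin n))ᶜ, r k := by
      rw [ha, ← hc1, Finset.mul_prod_erase _ _ (by simp [Ne.symm hij])]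
    have e2 : a j = r i * ∏ k ∈ ({i, j} : Finset (Fin n))ᶜ, r k := by
      rw [ha, ← hc2, Finset.mul_prod_erase _ _ (by simp [hij])]
    have e3 : (∏ k, r k) = r i * a i := by
      rw [ha, Finset.mul_prod_erase _ _ (mem_univ i)]
    rw [Finset.prod_pair hij, e3, e1, e2]; ring
  have h5 : (∑ i, a i) ^ 2 = (∑ i, a i ^ 2)
      + 2 * ∑ t ∈ (univ : Finset (Fin n)).powersetCard 2, ∏ i ∈ t, a i :=
    newton_sq_sum univ a
  have h6 : (∑ i, a i) ^ 2 ≤ (n : ℝ) * ∑ i, a i ^ 2 := by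
    have := sq_sum_le_card_mul_sum_sq (s := (univ : Finset (Fin n))) (f := a)
    rwa [hcard] at this
  have h7 : (∑ t ∈ (univ : Finset (Fin n)).powersetCard (y+1), ∏ i ∈ t, r i) *
      (∑ t ∈ (univ : Finset (Fin n)).powersetCard (y-1), ∏ i ∈ t, r i)
      = ∑ t ∈ (univ : Finset (Fin n)).powersetCard 2, ∏ i ∈ t, a i := by
    rw [h2, h3, Finset.mul_sum]
    exact Finset.sum_congr rfl h4
  have hyr : (y : ℝ) = (n : ℝ) - 1 := by
    have : (y : ℝ) + 1 = n := by exact_mod_cast congrArg (Nat.cast : ℕ → ℝ) hyn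
    linarith
  rw [ge_iff_le, h1, hyr]
  have h8 : (n:ℝ) * (∑ i, a i) ^ 2 = (n:ℝ) * (∑ i, a i ^ 2)
      + (n:ℝ) * (2 * ∑ t ∈ (univ : Finset (Fin n)).powersetCard 2, ∏ i ∈ t, a i) := by
    rw [h5]; ring
  nlinarith [h5, h6, h7, h8]


theorem newton_main : ∀ n : ℕ, ∀ r : Fin n → ℝ, (∀ i, 0 ≤ r i) → ∀ y : ℕ, 1 ≤ y → y < n →
    (∑ t ∈ (univ : Finset (Fin n)).powersetCard y, ∏ i ∈ t, r i) ^ 2 * y * ((n : ℝ) - y) ≥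
      (∑ t ∈ (univ : Finset (Fin n)).powersetCard (y+1), ∏ i ∈ t, r i) *
      (∑ t ∈ (univ : Finset (Fin n)).powersetCard (y-1), ∏ i ∈ t, r i) *
      ((n : ℝ) - y + 1) * ((y : ℝ) + 1) := by
  intro n
  induction n using Nat.strong_induction_on with
  | _ n IH =>
    intro r hr y hy1 hyn
    by_cases hc : y + 1 = n
    · exact newton_base n r hr y hy1 hc
    · have hyn' : y + 1 < n := by omega
      obtain ⟨r', hr'nn, hrel⟩ := newton_step n (by omega) r hr
      have IH' := IH (n-1) (by omega) r' hr'nn y hy1 (by omega)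
      set E : ℕ → ℝ := fun k =>
        ∑ t ∈ (univ : Finset (Fin n)).powersetCard k, ∏ i ∈ t, r i with hE
      set E' : ℕ → ℝ := fun k =>
        ∑ t ∈ (univ : Finset (Fin (n-1))).powersetCard k, ∏ i ∈ t, r' i with hE'
      have hcast1 : ((n-1:ℕ):ℝ) = (n:ℝ) - 1 := by
        rw [Nat.cast_sub (by omega : 1 ≤ n)]; norm_num
      rw [hcast1] at IH'
      have hy : (n:ℝ) * E' y = ((n:ℝ) - y) * E y := by
        have h := hrel y (by omega)
        rwa [Nat.cast_sub (by omega : y ≤ n)] at h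
      have hyp : (n:ℝ) * E' (y+1) = ((n:ℝ) - (y:ℝ) - 1) * E (y+1) := by
        have h := hrel (y+1) (by omega)
        rw [Nat.cast_sub (by omega : y+1 ≤ n)] at h
        push_cast at h ⊢
        linarith [h]
      have hym : (n:ℝ) * E' (y-1) = ((n:ℝ) - (y:ℝ) + 1) * E (y-1) := by
        have h := hrel (y-1) (by omega)
        rw [Nat.cast_sub (by omega : y-1 ≤ n), Nat.cast_sub (by omega : 1 ≤ y)] at h
        push_cast at h ⊢
        linarith [h]
      have key : (n:ℝ)^2 * (E' (y+1) * E' (y-1) * ((n:ℝ) - 1 - y + 1) * ((y:ℝ)+1))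
          ≤ (n:ℝ)^2 * (E' y ^ 2 * y * ((n:ℝ) - 1 - y)) := by
        apply mul_le_mul_of_nonneg_left _ (by positivity)
        exact IH'
      have e1 : (n:ℝ)^2 * (E' y ^ 2 * y * ((n:ℝ) - 1 - y))
          = (((n:ℝ) - y) * E y)^2 * y * ((n:ℝ) - 1 - y) := by
        rw [← hy]; ring
      have e2 : (n:ℝ)^2 * (E' (y+1) * E' (y-1) * ((n:ℝ) - 1 - y + 1) * ((y:ℝ)+1))
          = (((n:ℝ) - (y:ℝ) - 1) * E (y+1)) * ((((n:ℝ) - (y:ℝ) + 1)) * E (y-1))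
              * ((n:ℝ) - y) * ((y:ℝ)+1) := by
        rw [← hyp, ← hym]; ring
      rw [e1, e2] at key
      have hy2 : (y:ℝ) + 2 ≤ (n:ℝ) := by exact_mod_cast (by omega : y + 2 ≤ n)
      rw [ge_iff_le, ← mul_le_mul_iff_of_pos_left
        (show (0:ℝ) < ((n:ℝ) - y) * ((n:ℝ) - y - 1) from by nlinarith)]
      nlinarith [key]


/-- Newton's inequality for elementary symmetric polynomials of
nonnegative reals. -/
theorem stmt_1 (n : ℕ) (r : Fin n → ℝ) (hr : ∀ i, 0 ≤ r i)
    (e : ℕ → ℝ)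
    (he : ∀ k, e k = ∑ t ∈ (Finset.univ : Finset (Fin n)).powersetCard k, ∏ i ∈ t, r i)
    (y : ℕ) (hy1 : 1 ≤ y) (hyn : y < n) :
    e y ^ 2 * y * ((n : ℝ) - y) ≥
      e (y + 1) * e (y - 1) * ((n : ℝ) - y + 1) * ((y : ℝ) + 1) := by
  simp only [he]
  exact newton_main n r hr y hy1 hyn
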